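/- Let λ, μ ∈ ℝ with λ ≠ 0, μ ≠ 0 and λ/μ irrational, and let φ be the flow on the unit sphere X = {(z₁, z₂) ∈ ℂ² : |z₁|² + |z₂|² = 1} given by φ_t(z₁, z₂) = (e^{iλt} z₁, e^{iμt} z₂). Then φ has no attractor: there do not exist a proper subset A ⊊ X and a nonempty open set U ⊆ X with closure(φ_t(U)) ⊆ U for every t > 0 and A = ⋂_{t ≥ 0} closure(φ_t(U)). -/

import Mathlib

/-- The unit sphere `S³ = {(z₁, z₂) ∈ ℂ² : |z₁|² + |z₂|² = 1}`. -/
def SphereS3 : Type :=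
  {z : ℂ × ℂ // ‖z.1‖ ^ 2 + ‖z.2‖ ^ 2 = 1}

noncomputable instance : TopologicalSpace SphereS3 :=
  instTopologicalSpaceSubtype

/-- The flow `φ_t(z₁, z₂) = (e^{iλt} z₁, e^{iμt} z₂)` on the unit sphere `S³ ⊆ ℂ²`. -/
noncomputable def sphereFlow (lam mu : ℝ) (t : ℝ) (z : SphereS3) : SphereS3 :=
  ⟨(Complex.exp ((lam * t : ℝ) * Complex.I) * z.val.1,
      Complex.exp ((mu * t : ℝ) * Complex.I) * z.val.2), by
    have h := z.property
    rw [norm_mul, norm_mul, Complex.norm_exp_ofReal_mul_I, Complex.norm_exp_ofReal_mul_I,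
      one_mul, one_mul]
    exact h⟩

namespace SphereS3Aux

open Complex Set Filter

lemma flow_val (lam mu t : ℝ) (z : SphereS3) :
    (sphereFlow lam mu t z).val =
      (Complex.exp ((lam * t : ℝ) * Complex.I) * z.val.1,
       Complex.exp ((mu * t : ℝ) * Complex.I) * z.val.2) := rfl

lemma flow_add (lam mu s t : ℝ) (z : SphereS3) :
    sphereFlow lam mu (s + t) z = sphereFlow lam mu s (sphereFlow lam mu t z) := by
  apply Subtype.ext
  rw [flow_val, flow_val, flow_val]
  have h1 : (Complex.exp ((lam * (s + t) : ℝ) * Complex.I))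
      = Complex.exp ((lam * s : ℝ) * Complex.I) * Complex.exp ((lam * t : ℝ) * Complex.I) := by
    rw [← Complex.exp_add]; congr 1; push_cast; ring
  have h2 : (Complex.exp ((mu * (s + t) : ℝ) * Complex.I))
      = Complex.exp ((mu * s : ℝ) * Complex.I) * Complex.exp ((mu * t : ℝ) * Complex.I) := by
    rw [← Complex.exp_add]; congr 1; push_cast; ring
  rw [h1, h2]
  simp [mul_assoc]

lemma flow_zero (lam mu : ℝ) (z : SphereS3) : sphereFlow lam mu 0 z = z := by
  apply Subtype.ext
  rw [flow_val]
  simp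

lemma flow_surjective (lam mu t : ℝ) : Function.Surjective (sphereFlow lam mu t) := by
  intro z
  refine ⟨sphereFlow lam mu (-t) z, ?_⟩
  rw [← flow_add, add_neg_cancel, flow_zero]

lemma flow_continuous (lam mu t : ℝ) : Continuous (sphereFlow lam mu t) := by
  apply continuous_induced_rng.2
  have : (Subtype.val ∘ sphereFlow lam mu t) = fun z : SphereS3 =>
      (Complex.exp ((lam * t : ℝ) * Complex.I) * z.val.1,
       Complex.exp ((mu * t : ℝ) * Complex.I) * z.val.2) := rfl
  refine this ▸ ?_
  fun_prop

/-- Recurrence: arbitrarily late times at which both rotations are ε-close to the identity. -/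
lemma recurrence (lam mu t ε : ℝ) (hε : 0 < ε) :
    ∃ s : ℝ, t < s ∧ ‖Complex.exp ((lam * s : ℝ) * Complex.I) - 1‖ < ε ∧
      ‖Complex.exp ((mu * s : ℝ) * Complex.I) - 1‖ < ε := by
  set T : ℝ := |t| + 1 with hTdef
  have hT0 : 0 < T := by positivity
  set f : ℕ → ℂ × ℂ := fun k =>
    (Complex.exp ((lam * (T * k) : ℝ) * Complex.I),
     Complex.exp ((mu * (T * k) : ℝ) * Complex.I)) with hf
  have hmem : ∀ k, f k ∈ Metric.closedBall (0 : ℂ × ℂ) 1 := by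
    intro k
    simp only [Metric.mem_closedBall, dist_zero_right, Prod.norm_def, hf]
    rw [Complex.norm_exp_ofReal_mul_I, Complex.norm_exp_ofReal_mul_I]
    simp
  obtain ⟨a, -, φ, hφ, hconv⟩ :=
    tendsto_subseq_of_bounded Metric.isBounded_closedBall hmem
  obtain ⟨N, hN⟩ := Metric.tendsto_atTop.1 hconv (ε / 2) (by positivity)
  set m : ℕ := φ N with hm
  set n : ℕ := φ (N + 1) with hn
  have hmn : m < n := hφ (Nat.lt_succ_self N)
  have hdist : dist (f m) (f n) < ε := by
    calc dist (f m) (f n) ≤ dist (f m) a + dist (f n) a := dist_triangle_right _ _ _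
    _ < ε / 2 + ε / 2 := add_lt_add (hN N le_rfl) (hN (N + 1) (Nat.le_succ N))
    _ = ε := add_halves ε
  obtain ⟨d, hd⟩ : ∃ d : ℕ, n = m + (d + 1) :=
    ⟨n - m - 1, by omega⟩
  set s : ℝ := T * (d + 1 : ℕ) with hs
  have hsT : T ≤ s := by
    rw [hs]
    have h1d : (1:ℝ) ≤ ((d + 1 : ℕ) : ℝ) := by exact_mod_cast Nat.succ_le_succ (Nat.zero_le d)
    exact le_mul_of_one_le_right hT0.le h1d
  have hts : t < s := lt_of_lt_of_le (by rw [hTdef]; linarith [le_abs_self t]) hsT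
  have key : ∀ c : ℝ,
      Complex.exp ((c * (T * n) : ℝ) * Complex.I) - Complex.exp ((c * (T * m) : ℝ) * Complex.I)
        = Complex.exp ((c * (T * m) : ℝ) * Complex.I) * (Complex.exp ((c * s : ℝ) * Complex.I) - 1) := by
    intro c
    rw [mul_sub, mul_one, ← Complex.exp_add]
    have hn' : (n : ℝ) = (m : ℝ) + ((d : ℝ) + 1) := by exact_mod_cast hd
    have hs' : s = T * ((d : ℝ) + 1) := by rw [hs]; push_cast; ring
    have hsum : c * (T * (m : ℝ)) + c * s = c * (T * (n : ℝ)) := by rw [hs', hn']; ring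
    have harg : ((c * (T * (m : ℝ)) : ℝ) : ℂ) * Complex.I + ((c * s : ℝ) : ℂ) * Complex.I
        = ((c * (T * (n : ℝ)) : ℝ) : ℂ) * Complex.I := by
      calc ((c * (T * (m : ℝ)) : ℝ) : ℂ) * Complex.I + ((c * s : ℝ) : ℂ) * Complex.I
          = ((c * (T * (m : ℝ)) + c * s : ℝ) : ℂ) * Complex.I := by push_cast; ring
        _ = ((c * (T * (n : ℝ)) : ℝ) : ℂ) * Complex.I := by rw [hsum]
    rw [harg]
  have habs : ∀ c : ℝ,
      ‖Complex.exp ((c * s : ℝ) * Complex.I) - 1‖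
        = ‖Complex.exp ((c * (T * n) : ℝ) * Complex.I)
            - Complex.exp ((c * (T * m) : ℝ) * Complex.I)‖ := by
    intro c
    rw [key c, norm_mul, Complex.norm_exp_ofReal_mul_I, one_mul]
  have h1 : dist (f m).1 (f n).1 < ε ∧ dist (f m).2 (f n).2 < ε := by
    constructor
    · exact lt_of_le_of_lt (le_max_left _ _) (by rw [← Prod.dist_eq] at *; exact hdist)
    · exact lt_of_le_of_lt (le_max_right _ _) (by rw [← Prod.dist_eq] at *; exact hdist)
  refine ⟨s, hts, ?_, ?_⟩
  · rw [habs lam, norm_sub_rev]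
    have := h1.1
    rw [hf] at this
    simpa [Complex.dist_eq] using this
  · rw [habs mu, norm_sub_rev]
    have := h1.2
    rw [hf] at this
    simpa [Complex.dist_eq] using this

/-- A continuous surjective parametrization of the sphere, used for connectedness. -/
noncomputable def param : ℝ × ℝ × ℝ → SphereS3 := fun p =>
  ⟨((Real.cos p.1 : ℂ) * Complex.exp ((p.2.1 : ℝ) * Complex.I),
    (Real.sin p.1 : ℂ) * Complex.exp ((p.2.2 : ℝ) * Complex.I)), by
      rw [norm_mul, norm_mul, Complex.norm_exp_ofReal_mul_I, Complex.norm_exp_ofReal_mul_I,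
        mul_one, mul_one, Complex.norm_real, Complex.norm_real, Real.norm_eq_abs, Real.norm_eq_abs, _root_.sq_abs, _root_.sq_abs]
      exact Real.cos_sq_add_sin_sq p.1⟩

lemma param_continuous : Continuous param := by
  apply continuous_induced_rng.2
  have : (Subtype.val ∘ param) = fun p : ℝ × ℝ × ℝ =>
      (((Real.cos p.1 : ℂ) * Complex.exp ((p.2.1 : ℝ) * Complex.I),
        (Real.sin p.1 : ℂ) * Complex.exp ((p.2.2 : ℝ) * Complex.I)) : ℂ × ℂ) := rfl
  refine this ▸ ?_
  fun_prop

lemma param_surjective : Function.Surjective param := by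
  rintro ⟨⟨z₁, z₂⟩, hz⟩
  simp only at hz
  have h0 : (0:ℝ) ≤ ‖z₁‖ := norm_nonneg _
  have h0' : (0:ℝ) ≤ ‖z₂‖ := norm_nonneg _
  have h2 : ‖z₂‖ ≤ 1 := by nlinarith
  refine ⟨(Real.arcsin (‖z₂‖), Complex.arg z₁, Complex.arg z₂), ?_⟩
  apply Subtype.ext
  have hs : Real.sin (Real.arcsin (‖z₂‖)) = ‖z₂‖ :=
    Real.sin_arcsin (by linarith) h2
  have hc : Real.cos (Real.arcsin (‖z₂‖)) = ‖z₁‖ := by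
    rw [Real.cos_arcsin]
    have h3 : 1 - ‖z₂‖ ^ 2 = ‖z₁‖ ^ 2 := by linarith
    rw [h3, Real.sqrt_sq h0]
  show (((Real.cos _ : ℂ) * _, (Real.sin _ : ℂ) * _) : ℂ × ℂ) = (z₁, z₂)
  rw [hs, hc]
  rw [Complex.norm_mul_exp_arg_mul_I, Complex.norm_mul_exp_arg_mul_I]

instance : ConnectedSpace SphereS3 :=
  param_surjective.connectedSpace param_continuous

end SphereS3Aux

/-- if `λ ≠ 0`, `μ ≠ 0` and `λ/μ` is irrational, the flow
`φ_t(z₁, z₂) = (e^{iλt} z₁, e^{iμt} z₂)` on the unit sphere `S³ ⊆ ℂ²` has no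
attractor: there is no proper subset `A` and nonempty open attractor block `U` with
`A = ⋂_{t ≥ 0} closure (φ_t '' U)`. -/
theorem sphereFlow_no_attractor (lam mu : ℝ) (hlam : lam ≠ 0) (hmu : mu ≠ 0)
    (hirr : Irrational (lam / mu)) :
    ¬ ∃ (A U : Set SphereS3), A ≠ Set.univ ∧ U.Nonempty ∧ IsOpen U ∧
        (∀ t > (0 : ℝ), closure (sphereFlow lam mu t '' U) ⊆ U) ∧
        A = ⋂ t ∈ Set.Ici (0 : ℝ), closure (sphereFlow lam mu t '' U) := by
  open SphereS3Aux Complex Set Filter in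
  rintro ⟨A, U, hA, hUne, hUopen, hblock, hAeq⟩
  -- Step 1: the closure of `U` flows into `U` at every positive time.
  have hflow1 : ∀ s : ℝ, 0 < s → ∀ x ∈ closure U, sphereFlow lam mu s x ∈ U := by
    intro s hs x hx
    exact hblock s hs
      (image_closure_subset_closure_image (flow_continuous lam mu s) ⟨x, hx, rfl⟩)
  -- Step 2: `U` is closed, using recurrence of the rotation flow.
  have hUcl : closure U ⊆ U := by
    intro x hx
    apply hblock 1 one_pos
    have hrec : ∀ n : ℕ, ∃ s : ℝ, 1 < s ∧
        ‖Complex.exp ((lam * s : ℝ) * Complex.I) - 1‖ < 1 / (n + 1) ∧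
        ‖Complex.exp ((mu * s : ℝ) * Complex.I) - 1‖ < 1 / (n + 1) := by
      intro n
      exact recurrence lam mu 1 (1 / (n + 1)) (by positivity)
    choose s hs1 hsl hsm using hrec
    have hyU : ∀ n : ℕ, sphereFlow lam mu (s n) x ∈ sphereFlow lam mu 1 '' U := by
      intro n
      refine ⟨sphereFlow lam mu (s n - 1) x, hflow1 _ (by linarith [hs1 n]) x hx, ?_⟩
      rw [← flow_add]
      norm_num
    -- the flowed points converge back to `x`
    have hb1 : ‖x.val.1‖ ≤ 1 := by
      have := x.property
      nlinarith [norm_nonneg x.val.1, norm_nonneg x.val.2]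
    have hb2 : ‖x.val.2‖ ≤ 1 := by
      have := x.property
      nlinarith [norm_nonneg x.val.1, norm_nonneg x.val.2]
    have hdistle : ∀ n : ℕ, dist (sphereFlow lam mu (s n) x).val x.val ≤ 1 / (n + 1) := by
      intro n
      rw [flow_val, Prod.dist_eq]
      have e1 : dist (Complex.exp ((lam * s n : ℝ) * Complex.I) * x.val.1) x.val.1
          ≤ 1 / (n + 1) := by
        rw [Complex.dist_eq]
        have : Complex.exp ((lam * s n : ℝ) * Complex.I) * x.val.1 - x.val.1
            = (Complex.exp ((lam * s n : ℝ) * Complex.I) - 1) * x.val.1 := by ring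
        rw [this, norm_mul]
        calc ‖Complex.exp ((lam * s n : ℝ) * Complex.I) - 1‖ * ‖x.val.1‖
            ≤ (1 / (n + 1)) * 1 := by
              apply mul_le_mul (le_of_lt (hsl n)) hb1 (norm_nonneg _) (by positivity)
          _ = 1 / (n + 1) := mul_one _
      have e2 : dist (Complex.exp ((mu * s n : ℝ) * Complex.I) * x.val.2) x.val.2
          ≤ 1 / (n + 1) := by
        rw [Complex.dist_eq]
        have : Complex.exp ((mu * s n : ℝ) * Complex.I) * x.val.2 - x.val.2
            = (Complex.exp ((mu * s n : ℝ) * Complex.I) - 1) * x.val.2 := by ring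
        rw [this, norm_mul]
        calc ‖Complex.exp ((mu * s n : ℝ) * Complex.I) - 1‖ * ‖x.val.2‖
            ≤ (1 / (n + 1)) * 1 := by
              apply mul_le_mul (le_of_lt (hsm n)) hb2 (norm_nonneg _) (by positivity)
          _ = 1 / (n + 1) := mul_one _
      exact max_le e1 e2
    have hconv : Filter.Tendsto (fun n : ℕ => sphereFlow lam mu (s n) x) atTop (nhds x) := by
      refine tendsto_subtype_rng.2 ?_
      rw [tendsto_iff_dist_tendsto_zero]
      apply squeeze_zero (fun n => dist_nonneg) hdistle
      exact tendsto_one_div_add_atTop_nhds_zero_nat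
    exact mem_closure_of_tendsto hconv (Filter.Eventually.of_forall hyU)
  -- Step 3: `U` is clopen and nonempty, hence all of the (connected) sphere.
  have hUuniv : U = Set.univ :=
    IsClopen.eq_univ ⟨isClosed_of_closure_subset hUcl, hUopen⟩ hUne
  -- Step 4: then `A` is the whole sphere, contradiction.
  apply hA
  rw [hAeq, hUuniv]
  apply Set.eq_univ_of_univ_subset
  intro z _
  rw [Set.mem_iInter₂]
  intro t _
  rw [Set.image_univ, (flow_surjective lam mu t).range_eq, closure_univ]
  trivial
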